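/- In a parallel composition, paths starting strictly inside one branch stay in that branch until they reach the sink: if G is the parallel composition of series-parallel dags G₁ and G₂, u is a vertex coming from G₁ that is neither the source nor the sink of G, and p is a directed path in G starting at u, then every vertex of p except possibly its last vertex comes from G₁, and p can only leave the vertices of G₁ by ending at the sink t(G). -/
import Mathlib


/-- Reachability: there is a directed path (possibly of length zero). -/
def Reach (E : ℕ → ℕ → Prop) : ℕ → ℕ → Prop := Relation.ReflTransGen E

/-- `IsSP V E s t` : the two-terminal digraph with vertex set `V`, edge relation
`E`, source `s` and sink `t` is a (two-terminal) series-parallel dag.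
Identification of vertices in compositions is modeled by requiring the two
(otherwise disjoint) vertex sets to share exactly the identified vertices. -/
inductive IsSP : Finset ℕ → (ℕ → ℕ → Prop) → ℕ → ℕ → Prop where
  | base (s t : ℕ) (hst : s ≠ t) :
      IsSP {s, t} (fun a b => a = s ∧ b = t) s t
  | series {V₁ V₂ : Finset ℕ} {E₁ E₂ : ℕ → ℕ → Prop} {s₁ t₁ s₂ t₂ : ℕ}
      (h₁ : IsSP V₁ E₁ s₁ t₁) (h₂ : IsSP V₂ E₂ s₂ t₂)
      (hid : t₁ = s₂) (hint : V₁ ∩ V₂ = {t₁}) :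
      IsSP (V₁ ∪ V₂) (fun a b => E₁ a b ∨ E₂ a b) s₁ t₂
  | parallel {V₁ V₂ : Finset ℕ} {E₁ E₂ : ℕ → ℕ → Prop} {s t : ℕ}
      (h₁ : IsSP V₁ E₁ s t) (h₂ : IsSP V₂ E₂ s t)
      (hint : V₁ ∩ V₂ = {s, t}) :
      IsSP (V₁ ∪ V₂) (fun a b => E₁ a b ∨ E₂ a b) s t

lemma IsSP.source_mem' {V : Finset ℕ} {E : ℕ → ℕ → Prop} {s t : ℕ}
    (h : IsSP V E s t) : s ∈ V := by
  induction h with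
  | base s t hst => simp
  | series h₁ h₂ hid hint ih₁ ih₂ => exact Finset.mem_union_left _ ih₁
  | parallel h₁ h₂ hint ih₁ ih₂ => exact Finset.mem_union_left _ ih₁

lemma IsSP.sink_mem' {V : Finset ℕ} {E : ℕ → ℕ → Prop} {s t : ℕ}
    (h : IsSP V E s t) : t ∈ V := by
  induction h with
  | base s t hst => simp
  | series h₁ h₂ hid hint ih₁ ih₂ => exact Finset.mem_union_right _ ih₂
  | parallel h₁ h₂ hint ih₁ ih₂ => exact Finset.mem_union_left _ ih₁

lemma IsSP.edge_mem' {V : Finset ℕ} {E : ℕ → ℕ → Prop} {s t : ℕ}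
    (h : IsSP V E s t) {a b : ℕ} (hab : E a b) : a ∈ V ∧ b ∈ V := by
  induction h with
  | base s t hst => obtain ⟨rfl, rfl⟩ := hab; simp
  | series h₁ h₂ hid hint ih₁ ih₂ =>
      rcases hab with h | h
      · exact ⟨Finset.mem_union_left _ (ih₁ h).1, Finset.mem_union_left _ (ih₁ h).2⟩
      · exact ⟨Finset.mem_union_right _ (ih₂ h).1, Finset.mem_union_right _ (ih₂ h).2⟩
  | parallel h₁ h₂ hint ih₁ ih₂ =>
      rcases hab with h | h
      · exact ⟨Finset.mem_union_left _ (ih₁ h).1, Finset.mem_union_left _ (ih₁ h).2⟩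
      · exact ⟨Finset.mem_union_right _ (ih₂ h).1, Finset.mem_union_right _ (ih₂ h).2⟩

lemma IsSP.ne' {V : Finset ℕ} {E : ℕ → ℕ → Prop} {s t : ℕ}
    (h : IsSP V E s t) : s ≠ t := by
  induction h with
  | base s t hst => exact hst
  | series h₁ h₂ hid hint ih₁ ih₂ =>
      rename_i V₁ V₂ E₁ E₂ s₁ t₁ s₂ t₂
      intro he
      have hm : s₁ ∈ V₁ ∩ V₂ :=
        Finset.mem_inter.2 ⟨h₁.source_mem', he ▸ h₂.sink_mem'⟩
      rw [hint, Finset.mem_singleton] at hm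
      exact ih₁ hm
  | parallel h₁ h₂ hint ih₁ ih₂ => exact ih₁

lemma IsSP.no_in_source {V : Finset ℕ} {E : ℕ → ℕ → Prop} {s t : ℕ}
    (h : IsSP V E s t) {a : ℕ} : ¬ E a s := by
  induction h with
  | base s t hst => rintro ⟨_, rfl⟩; exact hst rfl
  | series h₁ h₂ hid hint ih₁ ih₂ =>
      rename_i V₁ V₂ E₁ E₂ s₁ t₁ s₂ t₂
      rintro (he | he)
      · exact ih₁ he
      · have hm : s₁ ∈ V₁ ∩ V₂ :=
          Finset.mem_inter.2 ⟨h₁.source_mem', (h₂.edge_mem' he).2⟩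
        rw [hint, Finset.mem_singleton] at hm
        exact h₁.ne' hm
  | parallel h₁ h₂ hint ih₁ ih₂ =>
      rintro (he | he)
      · exact ih₁ he
      · exact ih₂ he

lemma IsSP.no_out_sink {V : Finset ℕ} {E : ℕ → ℕ → Prop} {s t : ℕ}
    (h : IsSP V E s t) {b : ℕ} : ¬ E t b := by
  induction h with
  | base s t hst => rintro ⟨rfl, _⟩; exact hst rfl
  | series h₁ h₂ hid hint ih₁ ih₂ =>
      rename_i V₁ V₂ E₁ E₂ s₁ t₁ s₂ t₂
      rintro (he | he)
      · have hm : t₂ ∈ V₁ ∩ V₂ :=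
          Finset.mem_inter.2 ⟨(h₁.edge_mem' he).1, h₂.sink_mem'⟩
        rw [hint, Finset.mem_singleton] at hm
        exact h₂.ne' (hid ▸ hm.symm)
      · exact ih₂ he
  | parallel h₁ h₂ hint ih₁ ih₂ =>
      rintro (he | he)
      · exact ih₁ he
      · exact ih₂ he

/-- in a parallel composition, a directed path starting strictly
inside the first branch has all its vertices (except possibly the last) in the
first branch, and it can only leave the first branch by ending at the sink. -/
theorem sp_parallel_path_stays_in_branch
    {V₁ V₂ : Finset ℕ} {E₁ E₂ : ℕ → ℕ → Prop} {s t : ℕ}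
    (h₁ : IsSP V₁ E₁ s t) (h₂ : IsSP V₂ E₂ s t)
    (hint : V₁ ∩ V₂ = {s, t})
    {u : ℕ} (hu : u ∈ V₁) (hus : u ≠ s) (hut : u ≠ t)
    (p : List ℕ) (hp : p ≠ [])
    (hchain : List.Chain' (fun a b => E₁ a b ∨ E₂ a b) p)
    (hhead : p.head hp = u) :
    (∀ x ∈ p.dropLast, x ∈ V₁) ∧
      (p.getLast hp ∈ V₁ ∨ p.getLast hp = t) := by
  induction p generalizing u with
  | nil => exact absurd rfl hp
  | cons a q ih =>
      subst hhead
      simp only [List.head_cons] at *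
      match q, hchain with
      | [], _ =>
          refine ⟨by simp, Or.inl ?_⟩
          simpa using hu
      | b :: r, hchain =>
          have hedge : E₁ a b ∨ E₂ a b := (List.isChain_cons_cons.1 hchain).1
          have hchain' : List.Chain' (fun x y => E₁ x y ∨ E₂ x y) (b :: r) :=
            (List.isChain_cons_cons.1 hchain).2
          -- a is not in V₂
          have haV2 : a ∉ V₂ := by
            intro hmem
            have : a ∈ V₁ ∩ V₂ := Finset.mem_inter.2 ⟨hu, hmem⟩
            rw [hint] at this
            rcases Finset.mem_insert.1 this with h | h
            · exact hus h
            · exact hut (Finset.mem_singleton.1 h)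
          have he1 : E₁ a b := by
            rcases hedge with h | h
            · exact h
            · exact absurd (h₂.edge_mem' h).1 haV2
          have hbV1 : b ∈ V₁ := (h₁.edge_mem' he1).2
          have hbs : b ≠ s := fun h => h₁.no_in_source (h ▸ he1)
          by_cases hbt : b = t
          · -- b = t : path must stop here
            subst hbt
            match r, hchain' with
            | [], _ =>
                refine ⟨?_, Or.inr rfl⟩
                intro x hx
                simp at hx
                simpa [hx] using hu
            | c :: r', hchain' =>
                exfalso
                rcases (List.isChain_cons_cons.1 hchain').1 with h | h
                · exact h₁.no_out_sink h
                · exact h₂.no_out_sink h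
          · have := ih hbV1 hbs hbt (by simp) hchain' rfl
            refine ⟨?_, ?_⟩
            · intro x hx
              rw [List.dropLast_cons₂] at hx
              rcases List.mem_cons.1 hx with rfl | hx
              · exact hu
              · exact this.1 x hx
            · simpa [List.getLast_cons] using this.2
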